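/- arXiv:1611.07242 — 6 statements merged into one kernel-verified Lean document; each statement's English description precedes it below -/
import Mathlib

section
/- Let P(θ₁,θ₂) = 1 + p₁θ₁ + p₂θ₂ + p₁₂θ₁θ₂ with p₁, p₂, p₁₂ > 0, and let c = (p₁p₂ - p₁₂)/p₁₂² > 0 and λ > 0. Then the function f(x₁,x₂) = [p₁₂^{-λ}/Γ(λ)²] · exp(-(p₂/p₁₂)x₁ - (p₁/p₁₂)x₂) · (x₁x₂)^{λ-1} · ₀F₁(;λ; c x₁ x₂) on (0,∞)², extended by 0 elsewhere, is a probability density whose Laplace transform satisfies ∫∫ e^{-θ₁x₁ - θ₂x₂} f(x₁,x₂) dx₁dx₂ = [P(θ₁,θ₂)]^{-λ} for θ₁, θ₂ ≥ 0. -/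
open MeasureTheory Real Set

noncomputable def poch (a : ℝ) (n : ℕ) : ℝ := (ascPochhammer ℝ n).eval a

/-- The confluent hypergeometric limit function `₀F₁(;λ;z)`. -/
noncomputable def F01 (b z : ℝ) : ℝ := ∑' k : ℕ, z ^ k / (poch b k * k.factorial)

lemma poch_zero (a : ℝ) : poch a 0 = 1 := by simp [poch]

lemma poch_succ (a : ℝ) (k : ℕ) : poch a (k + 1) = poch a k * (a + k) :=
  ascPochhammer_succ_eval k a

lemma poch_pos {a : ℝ} (h : 0 < a) (k : ℕ) : 0 < poch a k :=
  ascPochhammer_pos k a h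

lemma poch_ge {a : ℝ} (h : 0 < a) (k : ℕ) : min a 1 ≤ poch a k := by
  induction k with
  | zero => rw [poch_zero]; exact min_le_right _ _
  | succ k ih =>
    rw [poch_succ]
    rcases Nat.eq_zero_or_pos k with rfl | hk
    · simpa [poch_zero] using min_le_left a 1
    · have h1 : (1:ℝ) ≤ a + k := by
        have : (1:ℝ) ≤ (k:ℝ) := by exact_mod_cast hk
        linarith
      calc min a 1 ≤ poch a k * 1 := by simpa using ih
        _ ≤ poch a k * (a + k) := by
            exact mul_le_mul_of_nonneg_left h1 (poch_pos h k).le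

lemma Gamma_poch {a : ℝ} (h : 0 < a) (k : ℕ) :
    Real.Gamma (a + k) = Real.Gamma a * poch a k := by
  induction k with
  | zero => simp [poch_zero]
  | succ k ih =>
    have h1 : a + ((k:ℕ) + 1 : ℕ) = (a + k) + 1 := by push_cast; ring
    have h2 : a + (k:ℝ) ≠ 0 := by positivity
    rw [h1, Real.Gamma_add_one h2, ih, poch_succ]; ring

lemma summable_poch {a : ℝ} (h : 0 < a) {z : ℝ} (hz : 0 ≤ z) :
    Summable (fun k : ℕ => z ^ k / (poch a k * k.factorial)) := by
  have hm : 0 < min a 1 := lt_min h one_pos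
  refine Summable.of_nonneg_of_le (fun k => div_nonneg (pow_nonneg hz _)
      (mul_pos (poch_pos h k) (by positivity)).le) (fun k => ?_)
    ((Real.summable_pow_div_factorial z).mul_left (1 / min a 1))
  have hden : min a 1 * k.factorial ≤ poch a k * k.factorial :=
    mul_le_mul_of_nonneg_right (poch_ge h k) (Nat.cast_nonneg _)
  have hpk : (0:ℝ) < poch a k * k.factorial := mul_pos (poch_pos h k) (by positivity)
  calc z ^ k / (poch a k * k.factorial) ≤ z ^ k / (min a 1 * k.factorial) := by
        gcongr
    _ = 1 / min a 1 * (z ^ k / k.factorial) := by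
        field_simp

lemma tsum_exp (y : ℝ) : ∑' k : ℕ, y ^ k / (k.factorial : ℝ) = Real.exp y := by
  rw [Real.exp_eq_exp_ℝ, NormedSpace.exp_eq_tsum_div]

lemma lint_gamma {s r : ℝ} (hs : 0 < s) (hr : 0 < r) :
    ∫⁻ x in Ioi (0:ℝ), ENNReal.ofReal (x ^ (s - 1) * Real.exp (-(r * x))) =
      ENNReal.ofReal ((1 / r) ^ s * Real.Gamma s) := by
  have hint : IntegrableOn (fun x : ℝ => x ^ (s - 1) * Real.exp (-(r * x))) (Ioi 0) := by
    have h := integrableOn_rpow_mul_exp_neg_mul_rpow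
      (show (-1:ℝ) < s - 1 by linarith) (show (0:ℝ) < 1 by norm_num) hr
    refine h.congr_fun (fun x hx => ?_) measurableSet_Ioi
    simp [Real.rpow_one, neg_mul]
  rw [← integral_rpow_mul_exp_neg_mul_Ioi hs hr,
    ← ofReal_integral_eq_lintegral_ofReal hint ?_]
  filter_upwards [self_mem_ae_restrict (measurableSet_Ioi : MeasurableSet (Ioi (0:ℝ)))]
    with x hx
  have : (0:ℝ) < x := hx
  positivity

noncomputable def gfun (lam r : ℝ) (k : ℕ) (t : ℝ) : ℝ :=
  t ^ (lam - 1) * t ^ k * Real.exp (-(r * t))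

lemma gfun_meas (lam r : ℝ) (k : ℕ) : Measurable (gfun lam r k) :=
  ((measurable_id.pow_const _).mul (measurable_id.pow_const _)).mul
    ((measurable_id.const_mul r).neg.exp)

lemma gfun_nonneg {lam r t : ℝ} (ht : 0 ≤ t) (k : ℕ) : 0 ≤ gfun lam r k t := by
  unfold gfun; positivity

lemma lint_gfun {lam r : ℝ} (hlam : 0 < lam) (hr : 0 < r) (k : ℕ) :
    ∫⁻ t in Ioi (0:ℝ), ENNReal.ofReal (gfun lam r k t) =
      ENNReal.ofReal ((1/r) ^ (lam + k) * Real.Gamma (lam + k)) := by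
  have heq : ∀ t ∈ Ioi (0:ℝ), ENNReal.ofReal (gfun lam r k t) =
      ENNReal.ofReal (t ^ ((lam + k) - 1) * Real.exp (-(r * t))) := by
    intro t ht
    have ht' : (0:ℝ) < t := ht
    unfold gfun
    rw [← Real.rpow_natCast t k, ← Real.rpow_add ht',
      show lam - 1 + (k:ℝ) = lam + k - 1 by ring]
  rw [setLIntegral_congr_fun measurableSet_Ioi heq,
    lint_gamma (by positivity) hr]

theorem bivariate_gamma_density (p₁ p₂ p₁₂ lam : ℝ)
    (hp₁ : 0 < p₁) (hp₂ : 0 < p₂) (hp₁₂ : 0 < p₁₂) (hlam : 0 < lam)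
    (hc : 0 < (p₁ * p₂ - p₁₂) / p₁₂ ^ 2)
    (c : ℝ) (hcdef : c = (p₁ * p₂ - p₁₂) / p₁₂ ^ 2)
    (f : ℝ → ℝ → ℝ)
    (hf : ∀ x₁ x₂ : ℝ, f x₁ x₂ =
      Set.indicator (Ioi (0:ℝ) ×ˢ Ioi (0:ℝ))
        (fun x : ℝ × ℝ =>
          p₁₂ ^ (-lam) / (Real.Gamma lam) ^ 2 *
            Real.exp (-(p₂ / p₁₂) * x.1 - (p₁ / p₁₂) * x.2) *
            (x.1 * x.2) ^ (lam - 1) * F01 lam (c * x.1 * x.2)) (x₁, x₂)) :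
    (∫ x : ℝ × ℝ, f x.1 x.2 = 1) ∧
      ∀ θ₁ θ₂ : ℝ, 0 ≤ θ₁ → 0 ≤ θ₂ →
        ∫ x : ℝ × ℝ, Real.exp (-(θ₁ * x.1) - θ₂ * x.2) * f x.1 x.2 =
          (1 + p₁ * θ₁ + p₂ * θ₂ + p₁₂ * θ₁ * θ₂) ^ (-lam) := by
  suffices main : ∀ θ₁ θ₂ : ℝ, 0 ≤ θ₁ → 0 ≤ θ₂ →
      ∫ x : ℝ × ℝ, Real.exp (-(θ₁ * x.1) - θ₂ * x.2) * f x.1 x.2 =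
        (1 + p₁ * θ₁ + p₂ * θ₂ + p₁₂ * θ₁ * θ₂) ^ (-lam) by
    refine ⟨?_, main⟩
    have h0 := main 0 0 le_rfl le_rfl
    simpa using h0
  intro θ₁ θ₂ hθ₁ hθ₂
  have hΓ : 0 < Real.Gamma lam := Real.Gamma_pos_of_pos hlam
  set S : Set (ℝ × ℝ) := Ioi 0 ×ˢ Ioi 0 with hS_def
  have hSm : MeasurableSet S := measurableSet_Ioi.prod measurableSet_Ioi
  set a := θ₁ + p₂ / p₁₂ with ha_def
  set b := θ₂ + p₁ / p₁₂ with hb_def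
  have ha : 0 < a := by rw [ha_def]; positivity
  have hb : 0 < b := by rw [hb_def]; positivity
  have hcpos : 0 < c := hcdef ▸ hc
  have habc : c < a * b := by
    have h1 : c < p₁ * p₂ / p₁₂ ^ 2 := by
      rw [hcdef]
      gcongr
      linarith
    have h2 : p₁ * p₂ / p₁₂ ^ 2 ≤ a * b := by
      have e : p₁ * p₂ / p₁₂ ^ 2 = (p₂ / p₁₂) * (p₁ / p₁₂) := by ring
      rw [e, ha_def, hb_def]
      have h3 : p₂ / p₁₂ ≤ θ₁ + p₂ / p₁₂ := by linarith
      exact mul_le_mul h3 (by linarith) (by positivity) (by positivity)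
    exact h1.trans_le h2
  have hrpos : 0 < a - c / b := by
    have : c / b < a := (div_lt_iff₀ hb).mpr habc
    linarith
  set C : ℝ := p₁₂ ^ (-lam) / Real.Gamma lam ^ 2 with hC_def
  have hC : 0 < C := by rw [hC_def]; positivity
  set CA : ℕ → ℝ := fun k => C * c ^ k / (poch lam k * k.factorial) with hCA_def
  have hCA : ∀ k, 0 < CA k := by
    intro k
    rw [hCA_def]
    have := poch_pos hlam k
    positivity
  -- the ENNReal-valued comparison function
  set G : ℝ × ℝ → ENNReal := S.indicator
    (fun x => ∑' k, ENNReal.ofReal (CA k * gfun lam a k x.1 * gfun lam b k x.2)) with hG_def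
  have hmeasAB : ∀ k : ℕ, Measurable fun x : ℝ × ℝ =>
      ENNReal.ofReal (CA k * gfun lam a k x.1 * gfun lam b k x.2) := by
    intro k
    exact ((((gfun_meas lam a k).comp measurable_fst).const_mul (CA k)).mul
      ((gfun_meas lam b k).comp measurable_snd)).ennreal_ofReal
  have hmeasTsum : Measurable fun x : ℝ × ℝ =>
      ∑' k, ENNReal.ofReal (CA k * gfun lam a k x.1 * gfun lam b k x.2) :=
    Measurable.ennreal_tsum hmeasAB
  have hGmeas : Measurable G := by
    rw [hG_def]; exact hmeasTsum.indicator hSm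
  have hexp2 : ∀ u v : ℝ,
      Real.exp (-(θ₁ * u) - θ₂ * v) * Real.exp (-(p₂ / p₁₂) * u - (p₁ / p₁₂) * v) =
        Real.exp (-(a * u)) * Real.exp (-(b * v)) := by
    intro u v
    rw [← Real.exp_add, ← Real.exp_add]
    congr 1
    rw [ha_def, hb_def]; ring
  -- the pointwise identity
  have hpt : ∀ x : ℝ × ℝ,
      ENNReal.ofReal (Real.exp (-(θ₁ * x.1) - θ₂ * x.2) * f x.1 x.2) = G x := by
    intro x
    rw [hf x.1 x.2, hG_def]
    by_cases hx : x ∈ S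
    · have hx1 : (0:ℝ) < x.1 := hx.1
      have hx2 : (0:ℝ) < x.2 := hx.2
      rw [Set.indicator_of_mem hx, Set.indicator_of_mem hx]
      have hz : 0 ≤ c * x.1 * x.2 := by positivity
      have hsum := summable_poch hlam hz
      have hterm : ∀ k : ℕ,
          Real.exp (-(θ₁ * x.1) - θ₂ * x.2) *
            (C * Real.exp (-(p₂ / p₁₂) * x.1 - (p₁ / p₁₂) * x.2) * (x.1 * x.2) ^ (lam - 1)) *
            ((c * x.1 * x.2) ^ k / (poch lam k * k.factorial)) =
          CA k * gfun lam a k x.1 * gfun lam b k x.2 := by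
        intro k
        rw [Real.mul_rpow hx1.le hx2.le, mul_pow, mul_pow, hCA_def]
        unfold gfun
        linear_combination (C * (x.1 ^ (lam - 1) * x.2 ^ (lam - 1)) *
          (c ^ k * x.1 ^ k * x.2 ^ k) / (poch lam k * k.factorial)) * hexp2 x.1 x.2
      have hmain : Real.exp (-(θ₁ * x.1) - θ₂ * x.2) *
          (C * Real.exp (-(p₂ / p₁₂) * x.1 - (p₁ / p₁₂) * x.2) *
            (x.1 * x.2) ^ (lam - 1) * F01 lam (c * x.1 * x.2)) =
          ∑' k, CA k * gfun lam a k x.1 * gfun lam b k x.2 := by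
        calc Real.exp (-(θ₁ * x.1) - θ₂ * x.2) *
            (C * Real.exp (-(p₂ / p₁₂) * x.1 - (p₁ / p₁₂) * x.2) *
              (x.1 * x.2) ^ (lam - 1) * F01 lam (c * x.1 * x.2)) =
            (Real.exp (-(θ₁ * x.1) - θ₂ * x.2) *
              (C * Real.exp (-(p₂ / p₁₂) * x.1 - (p₁ / p₁₂) * x.2) *
                (x.1 * x.2) ^ (lam - 1))) *
              ∑' k : ℕ, (c * x.1 * x.2) ^ k / (poch lam k * k.factorial) := by
              rw [F01]; ring
          _ = ∑' k : ℕ, Real.exp (-(θ₁ * x.1) - θ₂ * x.2) *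
              (C * Real.exp (-(p₂ / p₁₂) * x.1 - (p₁ / p₁₂) * x.2) *
                (x.1 * x.2) ^ (lam - 1)) *
              ((c * x.1 * x.2) ^ k / (poch lam k * k.factorial)) := tsum_mul_left.symm
          _ = ∑' k, CA k * gfun lam a k x.1 * gfun lam b k x.2 := tsum_congr hterm
      rw [hmain]
      refine ENNReal.ofReal_tsum_of_nonneg (fun k => ?_) ?_
      · exact mul_nonneg (mul_nonneg (hCA k).le (gfun_nonneg hx1.le k)) (gfun_nonneg hx2.le k)
      · exact (hsum.mul_left _).congr hterm
    · rw [Set.indicator_of_notMem hx, Set.indicator_of_notMem hx]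
      simp
  -- the inner integral
  have hinner : ∀ x₁ ∈ Ioi (0:ℝ),
      (∫⁻ x₂ in Ioi (0:ℝ), ∑' k, ENNReal.ofReal (CA k * gfun lam a k x₁ * gfun lam b k x₂)) =
      ENNReal.ofReal ((C * Real.Gamma lam * (1/b) ^ lam) *
        (x₁ ^ (lam - 1) * Real.exp (-((a - c / b) * x₁)))) := by
    intro x₁ hx₁
    have hx₁' : (0:ℝ) < x₁ := hx₁
    rw [lintegral_tsum (fun k =>
      ((Measurable.ennreal_ofReal (f := fun x₂ : ℝ => CA k * gfun lam a k x₁ * gfun lam b k x₂) (measurable_const.mul (gfun_meas lam b k)))).aemeasurable)]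
    have hBint : ∀ k : ℕ,
        (∫⁻ x₂ in Ioi (0:ℝ), ENNReal.ofReal (CA k * gfun lam a k x₁ * gfun lam b k x₂)) =
        ENNReal.ofReal ((C * Real.Gamma lam * (1/b) ^ lam *
          (x₁ ^ (lam - 1) * Real.exp (-(a * x₁)))) * ((c * x₁ / b) ^ k / k.factorial)) := by
      intro k
      have hAnn : 0 ≤ CA k * gfun lam a k x₁ :=
        mul_nonneg (hCA k).le (gfun_nonneg hx₁'.le k)
      simp_rw [ENNReal.ofReal_mul hAnn]
      rw [lintegral_const_mul' _ _ ENNReal.ofReal_ne_top, lint_gfun hlam hb k,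
        ← ENNReal.ofReal_mul hAnn]
      congr 1
      rw [Gamma_poch hlam k,
        show ((1:ℝ)/b) ^ (lam + (k:ℕ)) = (1/b) ^ lam * (1/b) ^ (k:ℕ) by
          rw [Real.rpow_add (by positivity), Real.rpow_natCast],
        hCA_def]
      unfold gfun
      have hpk := (poch_pos hlam k).ne'
      have hkf : (k.factorial : ℝ) ≠ 0 := by positivity
      field_simp
      ring
    rw [tsum_congr hBint,
      ← ENNReal.ofReal_tsum_of_nonneg (fun k => by positivity)
        ((Real.summable_pow_div_factorial (c * x₁ / b)).mul_left _),
      tsum_mul_left, tsum_exp]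
    congr 1
    have hexp3 : Real.exp (-(a * x₁)) * Real.exp (c * x₁ / b) =
        Real.exp (-((a - c / b) * x₁)) := by
      rw [← Real.exp_add]
      congr 1
      field_simp
      ring
    linear_combination (C * Real.Gamma lam * (1/b) ^ lam * x₁ ^ (lam - 1)) * hexp3
  -- the full lintegral
  have hE_nn : (0:ℝ) ≤ C * Real.Gamma lam * (1/b) ^ lam := by positivity
  have hout : ∫⁻ x : ℝ × ℝ, G x =
      ENNReal.ofReal ((1 + p₁ * θ₁ + p₂ * θ₂ + p₁₂ * θ₁ * θ₂) ^ (-lam)) := by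
    rw [hG_def, lintegral_indicator hSm, hS_def, Measure.volume_eq_prod,
      ← Measure.prod_restrict, lintegral_prod _ hmeasTsum.aemeasurable,
      setLIntegral_congr_fun measurableSet_Ioi hinner]
    simp_rw [ENNReal.ofReal_mul hE_nn]
    rw [lintegral_const_mul' _ _ ENNReal.ofReal_ne_top, lint_gamma hlam hrpos,
      ← ENNReal.ofReal_mul hE_nn]
    congr 1
    have hP : (1 + p₁ * θ₁ + p₂ * θ₂ + p₁₂ * θ₁ * θ₂) = p₁₂ * b * (a - c / b) := by
      rw [hcdef]
      field_simp
      rw [ha_def, hb_def]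
      field_simp
      ring
    have e1 : ((1:ℝ)/b) ^ lam = b ^ (-lam) := by
      rw [one_div, Real.inv_rpow hb.le, ← Real.rpow_neg hb.le]
    have e2 : ((1:ℝ)/(a - c/b)) ^ lam = (a - c/b) ^ (-lam) := by
      rw [one_div, Real.inv_rpow hrpos.le, ← Real.rpow_neg hrpos.le]
    rw [hP, Real.mul_rpow (by positivity) hrpos.le, Real.mul_rpow hp₁₂.le hb.le,
      e1, e2, hC_def]
    field_simp
  -- conversion from Bochner to lintegral
  have h_nn : ∀ x : ℝ × ℝ, 0 ≤ Real.exp (-(θ₁ * x.1) - θ₂ * x.2) * f x.1 x.2 := by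
    intro x
    refine mul_nonneg (Real.exp_nonneg _) ?_
    rw [hf]
    refine Set.indicator_nonneg (fun y hy => ?_) _
    have h1 : (0:ℝ) < y.1 := hy.1
    have h2 : (0:ℝ) < y.2 := hy.2
    have hF : 0 ≤ F01 lam (c * y.1 * y.2) := by
      refine tsum_nonneg fun k => ?_
      have := poch_pos hlam k
      positivity
    have hr2 : (0:ℝ) ≤ (y.1 * y.2) ^ (lam - 1) := Real.rpow_nonneg (by positivity) _
    positivity
  have h_meas : AEStronglyMeasurable
      (fun x : ℝ × ℝ => Real.exp (-(θ₁ * x.1) - θ₂ * x.2) * f x.1 x.2) volume := by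
    have heq : (fun x : ℝ × ℝ => Real.exp (-(θ₁ * x.1) - θ₂ * x.2) * f x.1 x.2) =
        fun x => (G x).toReal := by
      funext x
      rw [← hpt x, ENNReal.toReal_ofReal (h_nn x)]
    rw [heq]
    exact hGmeas.ennreal_toReal.aestronglyMeasurable
  rw [integral_eq_lintegral_of_nonneg_ae (ae_of_all _ h_nn) h_meas,
    lintegral_congr hpt, hout,
    ENNReal.toReal_ofReal (Real.rpow_nonneg (by positivity) _)]
end

section
/- Let λ₁ ≥ λ > 0, λ₂ ≥ λ, and 0 ≤ r ≤ 1. Then C(v₁,v₂) = v₁v₂ · [1 - r(1 - v₁^{1/λ₁})(1 - v₂^{1/λ₂})]^{-λ} is 2-increasing on [0,1]², i.e., for all 0 ≤ u₁ ≤ u₂ ≤ 1 and 0 ≤ v₁ ≤ v₂ ≤ 1, C(u₂,v₂) - C(u₂,v₁) - C(u₁,v₂) + C(u₁,v₁) ≥ 0. -/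
open Real Set

lemma E_nonneg (lam lam₁ lam₂ x s t : ℝ) (hlam : 0 < lam) (h1 : lam ≤ lam₁)
    (h2 : lam ≤ lam₂) (hx0 : 0 ≤ x) (hx1 : x ≤ 1) (hs : 0 ≤ s) (ht : 0 ≤ t)
    (hst : s + t ≤ 1) :
    0 ≤ lam₁ * (1 - s * (1 - x)) * (lam₂ * (1 - s * (1 - x)) - lam * t * (1 - x))
      - (lam + 1) * x * s * (lam₂ * (1 - s * (1 - x)) - lam * t * (1 - x))
      + x * (1 - s * (1 - x)) * (lam₂ * s + lam * t) := by
  have hD : 0 ≤ 1 - s * (1 - x) := by nlinarith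
  have hP : 0 ≤ lam₂ * (1 - s * (1 - x)) - lam * t * (1 - x) := by
    nlinarith [mul_nonneg (sub_nonneg.2 h2) hD,
      mul_nonneg hlam.le (mul_nonneg (by linarith : (0:ℝ) ≤ 1 - s - t) (by linarith : (0:ℝ) ≤ 1 - x)),
      mul_nonneg hlam.le (mul_nonneg ht hx0)]
  nlinarith [mul_nonneg (mul_nonneg (sub_nonneg.2 h1) hD) hP,
    mul_nonneg (mul_nonneg (mul_nonneg (sub_nonneg.2 h2) hlam.le) hD) (by linarith : (0:ℝ) ≤ 1 - s),
    mul_nonneg (mul_nonneg (mul_nonneg hlam.le hlam.le) hD) (by nlinarith : (0:ℝ) ≤ 1 - s - t + t * x),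
    mul_nonneg (mul_nonneg (mul_nonneg hlam.le hD) hx0) ht,
    mul_nonneg (mul_nonneg (mul_nonneg (mul_nonneg (mul_nonneg hlam.le (by linarith : (0:ℝ) ≤ lam + 1)) hx0) hs) ht) (by linarith : (0:ℝ) ≤ 1 - x)]

noncomputable def Fc (lam lam₁ lam₂ r x y : ℝ) : ℝ :=
  x ^ lam₁ * y ^ lam₂ * (1 - r * (1 - x) * (1 - y)) ^ (-lam)

noncomputable def Hc (lam lam₁ lam₂ r x y : ℝ) : ℝ :=
  x ^ lam₁ * (1 - r * (1 - x) * (1 - y)) ^ (-lam - 1) *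
    (lam₂ * (1 - r * (1 - x) * (1 - y)) - lam * (r * (1 - x)) * y)

lemma hasDerivAt_F_y (lam lam₁ lam₂ r x y : ℝ) (hr0 : 0 ≤ r) (hr1 : r ≤ 1)
    (hx0 : 0 ≤ x) (hx1 : x ≤ 1) (hy : 0 < y) (hy1 : y < 1) :
    HasDerivAt (fun v => Fc lam lam₁ lam₂ r x v)
      (y ^ (lam₂ - 1) * Hc lam lam₁ lam₂ r x y) y := by
  have hD : 0 < 1 - r * (1 - x) * (1 - y) := by
    nlinarith [mul_nonneg (mul_nonneg hr0 (by linarith : (0:ℝ) ≤ 1 - x)) hy.le,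
      mul_nonneg hr0 (by linarith : (0:ℝ) ≤ 1 - x)]
  have h1 : HasDerivAt (fun v : ℝ => v ^ lam₂) (lam₂ * y ^ (lam₂ - 1)) y :=
    Real.hasDerivAt_rpow_const (Or.inl hy.ne')
  have h2 : HasDerivAt (fun v : ℝ => 1 - r * (1 - x) * (1 - v)) (r * (1 - x)) y := by
    have h0 : HasDerivAt (fun v : ℝ => (1:ℝ) - v) (-1) y := by
      simpa using (hasDerivAt_id y).const_sub 1
    have hb := (h0.const_mul (r * (1 - x))).const_sub 1
    refine hb.congr_deriv ?_
    ring
  have h3 : HasDerivAt (fun v : ℝ => (1 - r * (1 - x) * (1 - v)) ^ (-lam))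
      (r * (1 - x) * (-lam) * (1 - r * (1 - x) * (1 - y)) ^ (-lam - 1)) y :=
    h2.rpow_const (Or.inl hD.ne')
  have h4 := ((h1.const_mul (x ^ lam₁)).mul h3)
  have e1 : y ^ lam₂ = y ^ (lam₂ - 1) * y := by
    rw [Real.rpow_sub_one hy.ne']; field_simp
  have e2 : (1 - r * (1 - x) * (1 - y)) ^ (-lam)
      = (1 - r * (1 - x) * (1 - y)) ^ (-lam - 1) * (1 - r * (1 - x) * (1 - y)) := by
    rw [Real.rpow_sub_one hD.ne']; field_simp
  refine HasDerivAt.congr_deriv h4 ?_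
  simp only [Hc]; rw [e1, e2]; ring

lemma hasDerivAt_H_x (lam lam₁ lam₂ r x y : ℝ) (hr0 : 0 ≤ r) (hr1 : r ≤ 1)
    (hx : 0 < x) (hx1 : x ≤ 1) (hy : 0 < y) (hy1 : y < 1) :
    HasDerivAt (fun u => Hc lam lam₁ lam₂ r u y)
      (x ^ (lam₁ - 1) * (1 - r * (1 - x) * (1 - y)) ^ (-lam - 1 - 1) *
        (lam₁ * (1 - r * (1 - x) * (1 - y)) *
            (lam₂ * (1 - r * (1 - x) * (1 - y)) - lam * (r * (1 - x)) * y)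
          - (lam + 1) * x * (r * (1 - y)) *
            (lam₂ * (1 - r * (1 - x) * (1 - y)) - lam * (r * (1 - x)) * y)
          + x * (1 - r * (1 - x) * (1 - y)) * (lam₂ * (r * (1 - y)) + lam * (r * y)))) x := by
  have hD : 0 < 1 - r * (1 - x) * (1 - y) := by
    nlinarith [mul_nonneg (mul_nonneg hr0 hx.le) hy.le,
      mul_nonneg hr0 (by linarith : (0:ℝ) ≤ 1 - y)]
  have h0 : HasDerivAt (fun u : ℝ => (1:ℝ) - u) (-1) x := by
    simpa using (hasDerivAt_id x).const_sub 1
  have hb : HasDerivAt (fun u : ℝ => 1 - r * (1 - u) * (1 - y)) (r * (1 - y)) x := by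
    have := (((h0.const_mul r).mul_const (1 - y)).const_sub 1)
    refine this.congr_deriv ?_
    ring
  have ha : HasDerivAt (fun u : ℝ => u ^ lam₁) (lam₁ * x ^ (lam₁ - 1)) x :=
    Real.hasDerivAt_rpow_const (Or.inl hx.ne')
  have hc : HasDerivAt (fun u : ℝ => (1 - r * (1 - u) * (1 - y)) ^ (-lam - 1))
      (r * (1 - y) * (-lam - 1) * (1 - r * (1 - x) * (1 - y)) ^ (-lam - 1 - 1)) x :=
    hb.rpow_const (Or.inl hD.ne')
  have hp : HasDerivAt
      (fun u : ℝ => lam₂ * (1 - r * (1 - u) * (1 - y)) - lam * (r * (1 - u)) * y)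
      (lam₂ * (r * (1 - y)) + lam * (r * y)) x := by
    have hr := ((h0.const_mul r).const_mul lam).mul_const y
    have := (hb.const_mul lam₂).sub hr
    refine this.congr_deriv ?_
    ring
  have full := (ha.mul hc).mul hp
  have e1 : x ^ lam₁ = x ^ (lam₁ - 1) * x := by
    rw [Real.rpow_sub_one hx.ne']; field_simp
  have e2 : (1 - r * (1 - x) * (1 - y)) ^ (-lam - 1)
      = (1 - r * (1 - x) * (1 - y)) ^ (-lam - 1 - 1) * (1 - r * (1 - x) * (1 - y)) := by
    rw [Real.rpow_sub_one hD.ne' (-lam - 1)]; field_simp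
  refine HasDerivAt.congr_deriv full ?_
  simp only [Pi.mul_apply]; rw [e1, e2]; ring

lemma H_nonneg (lam lam₁ lam₂ r x y : ℝ) (hlam : 0 < lam) (h2 : lam ≤ lam₂)
    (hr0 : 0 ≤ r) (hr1 : r ≤ 1) (hx0 : 0 ≤ x) (hx1 : x ≤ 1) (hy0 : 0 ≤ y) (hy1 : y ≤ 1) :
    0 ≤ Hc lam lam₁ lam₂ r x y := by
  have hD : 0 ≤ 1 - r * (1 - x) * (1 - y) := by
    nlinarith [mul_nonneg (mul_nonneg hr0 (by linarith : (0:ℝ) ≤ 1 - x)) hy0,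
      mul_nonneg hr0 (by linarith : (0:ℝ) ≤ 1 - x)]
  have hP : 0 ≤ lam₂ * (1 - r * (1 - x) * (1 - y)) - lam * (r * (1 - x)) * y := by
    nlinarith [mul_nonneg (sub_nonneg.2 h2) hD,
      mul_nonneg hlam.le (by nlinarith [mul_nonneg hr0 hx0] : (0:ℝ) ≤ 1 - r * (1 - x))]
  exact mul_nonneg (mul_nonneg (Real.rpow_nonneg hx0 _) (Real.rpow_nonneg hD _)) hP

lemma H_mono (lam lam₁ lam₂ r x₁ x₂ y : ℝ) (hlam : 0 < lam) (h1 : lam ≤ lam₁)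
    (h2 : lam ≤ lam₂) (hr0 : 0 ≤ r) (hr1 : r ≤ 1)
    (hx0 : 0 ≤ x₁) (hx12 : x₁ ≤ x₂) (hx21 : x₂ ≤ 1) (hy : 0 < y) (hy1 : y < 1) :
    Hc lam lam₁ lam₂ r x₁ y ≤ Hc lam lam₁ lam₂ r x₂ y := by
  have hlam₁ : 0 < lam₁ := hlam.trans_le h1
  rcases eq_or_lt_of_le hx0 with h | h
  · rw [← h]
    have : Hc lam lam₁ lam₂ r 0 y = 0 := by
      simp [Hc, Real.zero_rpow hlam₁.ne']
    rw [this]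
    exact H_nonneg lam lam₁ lam₂ r x₂ y hlam h2 hr0 hr1 (hx0.trans hx12) hx21 hy.le hy1.le
  · have cont : ContinuousOn (fun u => Hc lam lam₁ lam₂ r u y) (Icc x₁ x₂) := by
      intro u hu
      exact (hasDerivAt_H_x lam lam₁ lam₂ r u y hr0 hr1 (h.trans_le hu.1)
        (hu.2.trans hx21) hy hy1).continuousAt.continuousWithinAt
    have diff : DifferentiableOn ℝ (fun u => Hc lam lam₁ lam₂ r u y) (interior (Icc x₁ x₂)) := by
      rw [interior_Icc]
      intro u hu
      exact (hasDerivAt_H_x lam lam₁ lam₂ r u y hr0 hr1 (h.trans hu.1)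
        (hu.2.le.trans hx21) hy hy1).differentiableAt.differentiableWithinAt
    have nn : ∀ u ∈ interior (Icc x₁ x₂), 0 ≤ deriv (fun u => Hc lam lam₁ lam₂ r u y) u := by
      rw [interior_Icc]
      intro u hu
      have hu0 : 0 < u := h.trans hu.1
      have hu1 : u ≤ 1 := hu.2.le.trans hx21
      rw [(hasDerivAt_H_x lam lam₁ lam₂ r u y hr0 hr1 hu0 hu1 hy hy1).deriv]
      have hD : 0 ≤ 1 - r * (1 - u) * (1 - y) := by
        nlinarith [mul_nonneg (mul_nonneg hr0 hu0.le) hy.le,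
          mul_nonneg hr0 (by linarith : (0:ℝ) ≤ 1 - y)]
      have hE := E_nonneg lam lam₁ lam₂ u (r * (1 - y)) (r * y) hlam h1 h2 hu0.le hu1
        (mul_nonneg hr0 (by linarith)) (mul_nonneg hr0 hy.le) (by nlinarith)
      apply mul_nonneg (mul_nonneg (Real.rpow_nonneg hu0.le _) (Real.rpow_nonneg hD _))
      nlinarith [hE]
    exact monotoneOn_of_deriv_nonneg (convex_Icc x₁ x₂) cont diff nn
      ⟨le_rfl, hx12⟩ ⟨hx12, le_rfl⟩ hx12

lemma F_rect (lam lam₁ lam₂ r x₁ x₂ y₁ y₂ : ℝ) (hlam : 0 < lam) (h1 : lam ≤ lam₁)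
    (h2 : lam ≤ lam₂) (hr0 : 0 ≤ r) (hr1 : r ≤ 1)
    (hx0 : 0 ≤ x₁) (hx12 : x₁ ≤ x₂) (hx21 : x₂ ≤ 1)
    (hy0 : 0 ≤ y₁) (hy12 : y₁ ≤ y₂) (hy21 : y₂ ≤ 1) :
    0 ≤ Fc lam lam₁ lam₂ r x₂ y₂ - Fc lam lam₁ lam₂ r x₂ y₁
      - Fc lam lam₁ lam₂ r x₁ y₂ + Fc lam lam₁ lam₂ r x₁ y₁ := by
  have hlam₁ : 0 < lam₁ := hlam.trans_le h1
  have hlam₂ : 0 < lam₂ := hlam.trans_le h2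
  have Fzero : ∀ y : ℝ, Fc lam lam₁ lam₂ r 0 y = 0 := by
    intro y; simp [Fc, Real.zero_rpow hlam₁.ne']
  by_cases hx₂ : x₂ = 0
  · have hx₁ : x₁ = 0 := le_antisymm (hx₂ ▸ hx12) hx0
    rw [hx₁, hx₂, Fzero, Fzero]
    norm_num
  · have Fcont : ∀ x : ℝ, 0 ≤ x → x ≤ 1 →
        ContinuousOn (fun v => Fc lam lam₁ lam₂ r x v) (Icc y₁ y₂) := by
      intro x hx0' hx1'
      rcases eq_or_lt_of_le hx0' with h | h
      · have : (fun v => Fc lam lam₁ lam₂ r x v) = fun _ => 0 := by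
          funext v; rw [← h, Fzero]
        rw [this]; exact continuousOn_const
      · intro v hv
        have hv0 : 0 ≤ v := hy0.trans hv.1
        have hv1 : v ≤ 1 := hv.2.trans hy21
        have hD : 0 < 1 - r * (1 - x) * (1 - v) := by
          nlinarith [mul_nonneg (by linarith : (0:ℝ) ≤ 1 - r)
              (mul_nonneg (by linarith : (0:ℝ) ≤ 1 - x) (by linarith : (0:ℝ) ≤ 1 - v)),
            mul_nonneg hv0 (by linarith : (0:ℝ) ≤ 1 - x)]
        have c1 : ContinuousAt (fun v : ℝ => v ^ lam₂) v :=
          Real.continuousAt_rpow_const v lam₂ (Or.inr hlam₂.le)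
        have c2 : ContinuousAt (fun v : ℝ => 1 - r * (1 - x) * (1 - v)) v := by fun_prop
        have c3 : ContinuousAt (fun v : ℝ => (1 - r * (1 - x) * (1 - v)) ^ (-lam)) v :=
          c2.rpow_const (Or.inl hD.ne')
        exact ((continuousAt_const.mul c1).mul c3).continuousWithinAt
    have cont : ContinuousOn
        (fun v => Fc lam lam₁ lam₂ r x₂ v - Fc lam lam₁ lam₂ r x₁ v) (Icc y₁ y₂) :=
      (Fcont x₂ (hx0.trans hx12) hx21).sub (Fcont x₁ hx0 (hx12.trans hx21))
    have hder : ∀ v : ℝ, 0 < v → v < 1 →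
        HasDerivAt (fun v => Fc lam lam₁ lam₂ r x₂ v - Fc lam lam₁ lam₂ r x₁ v)
          (v ^ (lam₂ - 1) * Hc lam lam₁ lam₂ r x₂ v
            - v ^ (lam₂ - 1) * Hc lam lam₁ lam₂ r x₁ v) v := by
      intro v hv0 hv1
      exact (hasDerivAt_F_y lam lam₁ lam₂ r x₂ v hr0 hr1 (hx0.trans hx12) hx21 hv0 hv1).sub
        (hasDerivAt_F_y lam lam₁ lam₂ r x₁ v hr0 hr1 hx0 (hx12.trans hx21) hv0 hv1)
    have diff : DifferentiableOn ℝ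
        (fun v => Fc lam lam₁ lam₂ r x₂ v - Fc lam lam₁ lam₂ r x₁ v)
        (interior (Icc y₁ y₂)) := by
      rw [interior_Icc]
      intro v hv
      exact (hder v (hy0.trans_lt hv.1) (hv.2.trans_le hy21)).differentiableAt.differentiableWithinAt
    have nn : ∀ v ∈ interior (Icc y₁ y₂), 0 ≤
        deriv (fun v => Fc lam lam₁ lam₂ r x₂ v - Fc lam lam₁ lam₂ r x₁ v) v := by
      rw [interior_Icc]
      intro v hv
      have hv0 : 0 < v := hy0.trans_lt hv.1
      have hv1 : v < 1 := hv.2.trans_le hy21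
      rw [(hder v hv0 hv1).deriv]
      have := H_mono lam lam₁ lam₂ r x₁ x₂ v hlam h1 h2 hr0 hr1 hx0 hx12 hx21 hv0 hv1
      nlinarith [Real.rpow_nonneg hv0.le (lam₂ - 1),
        mul_nonneg (Real.rpow_nonneg hv0.le (lam₂ - 1)) (sub_nonneg.2 this)]
    have := monotoneOn_of_deriv_nonneg (convex_Icc y₁ y₂) cont diff nn
      ⟨le_rfl, hy12⟩ ⟨hy12, le_rfl⟩ hy12
    simp only at this
    linarith

theorem copula_two_increasing (lam lam₁ lam₂ r : ℝ)
    (hlam : 0 < lam) (hlam₁ : lam ≤ lam₁) (hlam₂ : lam ≤ lam₂)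
    (hr0 : 0 ≤ r) (hr1 : r ≤ 1)
    (C : ℝ → ℝ → ℝ)
    (hC : ∀ v₁ v₂ : ℝ, C v₁ v₂ =
      v₁ * v₂ * (1 - r * (1 - v₁ ^ (1 / lam₁)) * (1 - v₂ ^ (1 / lam₂))) ^ (-lam)) :
    ∀ u₁ u₂ v₁ v₂ : ℝ, 0 ≤ u₁ → u₁ ≤ u₂ → u₂ ≤ 1 → 0 ≤ v₁ → v₁ ≤ v₂ → v₂ ≤ 1 →
      0 ≤ C u₂ v₂ - C u₂ v₁ - C u₁ v₂ + C u₁ v₁ := by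
  intro u₁ u₂ v₁ v₂ hu0 hu12 hu21 hv0 hv12 hv21
  have hl₁ : 0 < lam₁ := hlam.trans_le hlam₁
  have hl₂ : 0 < lam₂ := hlam.trans_le hlam₂
  have key : ∀ u v : ℝ, 0 ≤ u → 0 ≤ v →
      C u v = Fc lam lam₁ lam₂ r (u ^ (1 / lam₁)) (v ^ (1 / lam₂)) := by
    intro u v hu hv
    rw [hC u v]
    simp only [Fc]
    rw [← Real.rpow_mul hu, ← Real.rpow_mul hv, one_div_mul_cancel hl₁.ne',
      one_div_mul_cancel hl₂.ne', Real.rpow_one, Real.rpow_one]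
  rw [key u₂ v₂ (hu0.trans hu12) (hv0.trans hv12), key u₂ v₁ (hu0.trans hu12) hv0,
    key u₁ v₂ hu0 (hv0.trans hv12), key u₁ v₁ hu0 hv0]
  exact F_rect lam lam₁ lam₂ r _ _ _ _ hlam hlam₁ hlam₂ hr0 hr1
    (Real.rpow_nonneg hu0 _) (Real.rpow_le_rpow hu0 hu12 (by positivity))
    (Real.rpow_le_one (hu0.trans hu12) hu21 (by positivity))
    (Real.rpow_nonneg hv0 _) (Real.rpow_le_rpow hv0 hv12 (by positivity))
    (Real.rpow_le_one (hv0.trans hv12) hv21 (by positivity))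
end

section
/- Let P(θ) = Σ_{T ⊆ [n]} p_T θ^T be an affine polynomial in n variables with p_∅ = 1 and p_i ≠ 0 for all i ∈ [n]. Then P(θ) = Σ_{T ⊆ [n]} (-1)^{|T|} P(-(1/p)·1_T) · (u - 1)^T · u^{[n]\T}, where u_i = 1 + p_i θ_i, (1/p·1_T)_i = 1/p_i if i ∈ T and 0 otherwise, (u-1)^T = Π_{t∈T}(u_t - 1), and u^S = Π_{s∈S} u_s. In particular the coefficient of (u-1)^T u^{[n]\T} vanishes for |T| = 1 and equals 1 for T = ∅. -/
open Finset

private lemma prod_ite_subset_aux {n : ℕ} (S T : Finset (Fin n)) (f : Fin n → ℝ) :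
    (∏ i ∈ S, (if i ∈ T then f i else 0)) = if S ⊆ T then ∏ i ∈ S, f i else 0 := by
  split_ifs with h
  · exact Finset.prod_congr rfl fun i hi => if_pos (h hi)
  · obtain ⟨i, hiS, hiT⟩ := Finset.not_subset.mp h
    exact Finset.prod_eq_zero hiS (if_neg hiT)

theorem affine_polynomial_basis_expansion
    {n : ℕ} (p : Finset (Fin n) → ℝ)
    (hpe : p ∅ = 1) (hpi : ∀ i : Fin n, p {i} ≠ 0)
    (P : (Fin n → ℝ) → ℝ)
    (hP : ∀ θ : Fin n → ℝ, P θ = ∑ T : Finset (Fin n), p T * ∏ i ∈ T, θ i) :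
    (∀ θ : Fin n → ℝ,
        P θ = ∑ T : Finset (Fin n),
          (-1 : ℝ) ^ T.card *
            P (fun i => if i ∈ T then -(1 / p {i}) else 0) *
            (∏ t ∈ T, ((1 + p {t} * θ t) - 1)) *
            ∏ s ∈ Tᶜ, (1 + p {s} * θ s)) ∧
    (∀ i : Fin n, P (fun j => if j ∈ ({i} : Finset (Fin n)) then -(1 / p {i}) else 0) = 0) ∧
    P (fun _ => 0) = 1 := by
  refine ⟨?_, ?_, ?_⟩
  · -- main identity
    intro θ
    symm
    simp only [hP, prod_ite_subset_aux, add_sub_cancel_left]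
    simp only [Finset.mul_sum, Finset.sum_mul]
    rw [Finset.sum_comm]
    refine Finset.sum_congr rfl fun S _ => ?_
    -- key product lemmas
    have key1 : (-1 : ℝ) ^ S.card * (∏ i ∈ S, -(1 / p {i})) * (∏ t ∈ S, (p {t} * θ t))
        = ∏ i ∈ S, θ i := by
      rw [← Finset.prod_const (-1 : ℝ), ← Finset.prod_mul_distrib, ← Finset.prod_mul_distrib]
      exact Finset.prod_congr rfl fun i _ => by have := hpi i; field_simp
    have key2 : ∀ W : Finset (Fin n),
        (-1 : ℝ) ^ W.card * (∏ t ∈ W, (p {t} * θ t)) = ∏ t ∈ W, -(p {t} * θ t) := by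
      intro W
      rw [← Finset.prod_const (-1 : ℝ), ← Finset.prod_mul_distrib]
      exact Finset.prod_congr rfl fun i _ => by ring
    -- reduce the if-sum to a sum over supersets of S, reindexed by W = T \ S
    have step : (∑ T : Finset (Fin n),
          (-1 : ℝ) ^ T.card * (p S * if S ⊆ T then ∏ i ∈ S, -(1 / p {i}) else 0) *
            (∏ t ∈ T, (p {t} * θ t)) * ∏ s ∈ Tᶜ, (1 + p {s} * θ s))
        = ∑ W ∈ Sᶜ.powerset,
            (-1 : ℝ) ^ (S ∪ W).card * (p S * ∏ i ∈ S, -(1 / p {i})) *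
              (∏ t ∈ S ∪ W, (p {t} * θ t)) * ∏ s ∈ (S ∪ W)ᶜ, (1 + p {s} * θ s) := by
      rw [show (∑ T : Finset (Fin n),
          (-1 : ℝ) ^ T.card * (p S * if S ⊆ T then ∏ i ∈ S, -(1 / p {i}) else 0) *
            (∏ t ∈ T, (p {t} * θ t)) * ∏ s ∈ Tᶜ, (1 + p {s} * θ s))
        = ∑ T : Finset (Fin n), if S ⊆ T then
            (-1 : ℝ) ^ T.card * (p S * ∏ i ∈ S, -(1 / p {i})) *
              (∏ t ∈ T, (p {t} * θ t)) * ∏ s ∈ Tᶜ, (1 + p {s} * θ s) else 0 from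
          Finset.sum_congr rfl fun T _ => by split_ifs with h <;> simp]
      rw [← Finset.sum_filter]
      refine Finset.sum_nbij' (fun T => T \ S) (fun W => S ∪ W) ?_ ?_ ?_ ?_ ?_
      · intro T hT
        simp only [Finset.mem_powerset]
        intro x hx
        simp only [Finset.mem_sdiff] at hx
        simp [hx.2]
      · intro W hW
        simp [Finset.subset_union_left]
      · intro T hT
        simp only [Finset.mem_filter] at hT
        exact Finset.union_sdiff_of_subset hT.2
      · intro W hW
        simp only [Finset.mem_powerset] at hW
        refine Finset.union_sdiff_cancel_left ?_
        exact Finset.disjoint_left.mpr fun x hxS hxW => (Finset.mem_compl.mp (hW hxW)) hxS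
      · intro T hT
        simp only [Finset.mem_filter] at hT
        rw [Finset.union_sdiff_of_subset hT.2]
    rw [step]
    have final : ∀ W ∈ Sᶜ.powerset,
        (-1 : ℝ) ^ (S ∪ W).card * (p S * ∏ i ∈ S, -(1 / p {i})) *
          (∏ t ∈ S ∪ W, (p {t} * θ t)) * ∏ s ∈ (S ∪ W)ᶜ, (1 + p {s} * θ s)
        = (p S * ∏ i ∈ S, θ i) *
            ((∏ t ∈ W, -(p {t} * θ t)) * ∏ s ∈ Sᶜ \ W, (1 + p {s} * θ s)) := by
      intro W hW
      simp only [Finset.mem_powerset] at hW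
      have hd : Disjoint S W :=
        Finset.disjoint_left.mpr fun x hxS hxW => (Finset.mem_compl.mp (hW hxW)) hxS
      rw [Finset.card_union_of_disjoint hd, Finset.prod_union hd, Finset.compl_union,
        ← Finset.sdiff_eq_inter_compl, pow_add]
      calc (-1:ℝ) ^ S.card * (-1:ℝ) ^ W.card * (p S * ∏ i ∈ S, -(1 / p {i})) *
            ((∏ t ∈ S, (p {t} * θ t)) * ∏ t ∈ W, (p {t} * θ t)) *
            ∏ s ∈ Sᶜ \ W, (1 + p {s} * θ s)
          = p S * ((-1:ℝ) ^ S.card * (∏ i ∈ S, -(1 / p {i})) * ∏ t ∈ S, (p {t} * θ t)) *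
            ((-1:ℝ) ^ W.card * ∏ t ∈ W, (p {t} * θ t)) *
            ∏ s ∈ Sᶜ \ W, (1 + p {s} * θ s) := by ring
        _ = _ := by rw [key1, key2 W]; ring
    rw [Finset.sum_congr rfl final, ← Finset.mul_sum, ← Finset.prod_add]
    have : ∏ s ∈ Sᶜ, (-(p {s} * θ s) + (1 + p {s} * θ s)) = 1 :=
      Finset.prod_eq_one fun s _ => by ring
    rw [this, mul_one]
  · -- singletons vanish
    intro i
    rw [hP]
    simp only [prod_ite_subset_aux]
    rw [Fintype.sum_eq_add ∅ {i} (Ne.symm (Finset.singleton_ne_empty i))]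
    · simp only [Finset.empty_subset, if_pos, Finset.prod_empty, hpe,
        Finset.prod_singleton, Finset.Subset.refl]
      have := hpi i
      field_simp
      norm_num
    · intro T hT
      rw [if_neg, mul_zero]
      rw [Finset.subset_singleton_iff]
      tauto
  · -- value at 0
    rw [hP]
    rw [Fintype.sum_eq_single ∅]
    · simp [hpe]
    · intro T hT
      obtain ⟨i, hi⟩ := Finset.nonempty_iff_ne_empty.mpr hT
      simp [Finset.prod_eq_zero hi]
end

section
/- Let P(θ) = Σ_{T⊆[n]} p_T θ^T be an affine polynomial with P(0)=1, p_i > 0 for all i, and suppose γ_{(P,λ)} exists for λ > 0. Then for all v ∈ (0,1]ⁿ, setting θ_i = (v_i^{-1/λ} - 1)/p_i, the Laplace transform satisfies [P(θ)]^{-λ} = v^{[n]} · [1 + Σ_{T⊆[n], |T|>1} (-1)^{|T|} P(-(1/p)·1_T) · Π_{t∈T}(1 - v_t^{1/λ})]^{-λ}, so that the Laplace copula of γ_{(P,λ)} is C(v) = v^{[n]}·[1 + Σ_{|T|>1} (-1)^{|T|} P(-(1/p)·1_T) Π_{t∈T}(1 - v_t^{1/λ})]^{-λ}. -/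
set_option maxHeartbeats 1000000

open Finset Real Set

private lemma prod_neg'' {n : ℕ} (s : Finset (Fin n)) (f : Fin n → ℝ) :
    ∏ i ∈ s, (-f i) = (-1 : ℝ) ^ s.card * ∏ i ∈ s, f i := by
  rw [← Finset.prod_const, ← Finset.prod_mul_distrib]; simp

private lemma mul_rpow_of_pos (x : ℝ) {a : ℝ} (ha : 0 < a) {c : ℝ} (hc : c ≠ 0) :
    (x * a) ^ c = x ^ c * a ^ c := by
  rcases lt_trichotomy x 0 with h | h | h
  · rw [Real.rpow_def_of_neg (mul_neg_of_neg_of_pos h ha),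
      Real.rpow_def_of_neg h, Real.rpow_def_of_pos ha,
      Real.log_mul h.ne ha.ne', add_mul, Real.exp_add]
    ring
  · rw [h, zero_mul, Real.zero_rpow hc, zero_mul]
  · exact Real.mul_rpow h.le ha.le

private lemma key_identity {n : ℕ} (p : Finset (Fin n) → ℝ) (u : Fin n → ℝ)
    (hpe : p ∅ = 1) (hpi : ∀ i, 0 < p {i}) (hu : ∀ i, 0 < u i)
    (Q : Finset (Fin n) → ℝ)
    (hQ : ∀ U, Q U = ∑ S : Finset (Fin n), p S * ∏ i ∈ S,
        (if i ∈ U then -(1 / p {i}) else 0)) :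
    (∏ i, u i) * (∑ T : Finset (Fin n), p T * ∏ i ∈ T, ((u i)⁻¹ - 1) / p {i}) =
      1 + ∑ T ∈ Finset.univ.filter (fun T : Finset (Fin n) => 1 < T.card),
        (-1 : ℝ) ^ T.card * Q T * ∏ t ∈ T, (1 - u t) := by
  classical
  -- powerset form of Q
  have hQeq : ∀ U : Finset (Fin n),
      Q U = ∑ S ∈ U.powerset, p S * ∏ i ∈ S, (-(1 / p {i})) := by
    intro U
    have h1 : ∑ S ∈ U.powerset, p S * ∏ i ∈ S, (if i ∈ U then -(1 / p {i}) else 0)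
        = ∑ S : Finset (Fin n), p S * ∏ i ∈ S, (if i ∈ U then -(1 / p {i}) else 0) := by
      refine Finset.sum_subset (Finset.subset_univ _) ?_
      intro S _ hS
      obtain ⟨i, hiS, hiU⟩ := Finset.not_subset.1 (fun h => hS (Finset.mem_powerset.2 h))
      rw [Finset.prod_eq_zero hiS (by simp [hiU]), mul_zero]
    rw [hQ, ← h1]
    refine Finset.sum_congr rfl fun S hS => ?_
    have hSU := Finset.mem_powerset.1 hS
    exact congrArg _ (Finset.prod_congr rfl fun i hi => by simp [hSU hi])
  -- the full sum over all T
  have main : (∏ i, u i) * (∑ T : Finset (Fin n), p T * ∏ i ∈ T, ((u i)⁻¹ - 1) / p {i}) =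
      ∑ T : Finset (Fin n), (-1 : ℝ) ^ T.card * Q T * ∏ t ∈ T, (1 - u t) := by
    rw [Finset.mul_sum]
    have lhs_eq : ∀ S : Finset (Fin n),
        (∏ i, u i) * (p S * ∏ i ∈ S, ((u i)⁻¹ - 1) / p {i}) =
          ∑ R ∈ Sᶜ.powerset, p S * (∏ i ∈ S, (1 - u i) / p {i}) * ∏ i ∈ R, (-(1 - u i)) := by
      intro S
      have h1 : ∏ i ∈ Sᶜ, u i = ∑ R ∈ Sᶜ.powerset, ∏ i ∈ R, (-(1 - u i)) := by
        calc ∏ i ∈ Sᶜ, u i = ∏ i ∈ Sᶜ, ((-(1 - u i)) + 1) :=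
              Finset.prod_congr rfl (fun i _ => by ring)
          _ = ∑ R ∈ Sᶜ.powerset, (∏ i ∈ R, (-(1 - u i))) * ∏ i ∈ Sᶜ \ R, (1:ℝ) :=
              Finset.prod_add _ _ _
          _ = _ := Finset.sum_congr rfl fun R _ => by rw [Finset.prod_const_one, mul_one]
      have h2 : (∏ i ∈ S, u i) * ∏ i ∈ S, ((u i)⁻¹ - 1) / p {i} =
          ∏ i ∈ S, (1 - u i) / p {i} := by
        rw [← Finset.prod_mul_distrib]
        refine Finset.prod_congr rfl fun i _ => ?_
        have : u i * ((u i)⁻¹ - 1) = 1 - u i := by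
          rw [mul_sub, mul_inv_cancel₀ (hu i).ne', mul_one]
        rw [← mul_div_assoc, this]
      calc (∏ i, u i) * (p S * ∏ i ∈ S, ((u i)⁻¹ - 1) / p {i})
          = p S * ((∏ i ∈ S, u i) * ∏ i ∈ S, ((u i)⁻¹ - 1) / p {i}) * ∏ i ∈ Sᶜ, u i := by
            rw [← Finset.prod_mul_prod_compl S u]; ring
        _ = p S * (∏ i ∈ S, (1 - u i) / p {i}) * ∑ R ∈ Sᶜ.powerset, ∏ i ∈ R, (-(1 - u i)) := by
            rw [h2, h1]
        _ = _ := by rw [Finset.mul_sum]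
    have rhs_eq : ∀ U : Finset (Fin n),
        (-1 : ℝ) ^ U.card * Q U * ∏ t ∈ U, (1 - u t) =
          ∑ S ∈ U.powerset, p S * (∏ i ∈ S, (-(1 / p {i}))) *
            ((-1 : ℝ) ^ U.card * ∏ t ∈ U, (1 - u t)) := by
      intro U
      rw [hQeq, Finset.mul_sum, Finset.sum_mul]
      exact Finset.sum_congr rfl fun S _ => by ring
    calc ∑ S : Finset (Fin n), (∏ i, u i) * (p S * ∏ i ∈ S, ((u i)⁻¹ - 1) / p {i})
        = ∑ S : Finset (Fin n), ∑ R ∈ Sᶜ.powerset,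
            p S * (∏ i ∈ S, (1 - u i) / p {i}) * ∏ i ∈ R, (-(1 - u i)) :=
          Finset.sum_congr rfl fun S _ => lhs_eq S
      _ = ∑ x ∈ (Finset.univ : Finset (Finset (Fin n))).sigma (fun S => Sᶜ.powerset),
            p x.1 * (∏ i ∈ x.1, (1 - u i) / p {i}) * ∏ i ∈ x.2, (-(1 - u i)) :=
          Finset.sum_sigma' _ _ _
      _ = ∑ x ∈ (Finset.univ : Finset (Finset (Fin n))).sigma (fun U => U.powerset),
            p x.2 * (∏ i ∈ x.2, (-(1 / p {i}))) *
              ((-1 : ℝ) ^ x.1.card * ∏ t ∈ x.1, (1 - u t)) := by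
          refine Finset.sum_nbij' (fun x => ⟨x.1 ∪ x.2, x.1⟩) (fun x => ⟨x.2, x.1 \ x.2⟩)
            ?_ ?_ ?_ ?_ ?_
          · rintro ⟨S, R⟩ _
            exact Finset.mem_sigma.2 ⟨Finset.mem_univ _,
              Finset.mem_powerset.2 Finset.subset_union_left⟩
          · rintro ⟨U, S⟩ hx
            simp only [Finset.mem_sigma, Finset.mem_powerset, Finset.mem_univ, true_and] at hx ⊢
            intro x hxm
            simp only [Finset.mem_sdiff] at hxm
            simp [Finset.mem_compl, hxm.2]
          · rintro ⟨S, R⟩ hx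
            simp only [Finset.mem_sigma, Finset.mem_powerset, Finset.mem_univ, true_and] at hx
            have hd : Disjoint S R := Finset.disjoint_right.2 fun a ha =>
              Finset.mem_compl.1 (hx ha)
            simp [Finset.union_sdiff_cancel_left hd]
          · rintro ⟨U, S⟩ hx
            simp only [Finset.mem_sigma, Finset.mem_powerset, Finset.mem_univ, true_and] at hx
            simp [Finset.union_sdiff_of_subset hx]
          · rintro ⟨S, R⟩ hx
            simp only [Finset.mem_sigma, Finset.mem_powerset, Finset.mem_univ, true_and] at hx
            have hd : Disjoint S R := Finset.disjoint_right.2 fun a ha =>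
              Finset.mem_compl.1 (hx ha)
            show p S * (∏ i ∈ S, (1 - u i) / p {i}) * ∏ i ∈ R, (-(1 - u i)) =
              p S * (∏ i ∈ S, (-(1 / p {i}))) *
                ((-1 : ℝ) ^ (S ∪ R).card * ∏ t ∈ S ∪ R, (1 - u t))
            have e1 : (-1 : ℝ) ^ (S ∪ R).card * ∏ t ∈ S ∪ R, (1 - u t) =
                (∏ t ∈ S, (-(1 - u t))) * ∏ t ∈ R, (-(1 - u t)) := by
              rw [← prod_neg'', Finset.prod_union hd]
            have e2 : (∏ i ∈ S, (-(1 / p {i}))) * ∏ t ∈ S, (-(1 - u t)) =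
                ∏ i ∈ S, (1 - u i) / p {i} := by
              rw [← Finset.prod_mul_distrib]
              refine Finset.prod_congr rfl fun i _ => ?_
              have hpne : p {i} ≠ 0 := (hpi i).ne'
              field_simp
            rw [e1]
            linear_combination (-(p S * ∏ t ∈ R, (-(1 - u t)))) * e2
      _ = ∑ U : Finset (Fin n), ∑ S ∈ U.powerset,
            p S * (∏ i ∈ S, (-(1 / p {i}))) *
              ((-1 : ℝ) ^ U.card * ∏ t ∈ U, (1 - u t)) :=
          (Finset.sum_sigma' Finset.univ (fun U => U.powerset)
            (fun U S => p S * (∏ i ∈ S, (-(1 / p {i}))) *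
              ((-1 : ℝ) ^ U.card * ∏ t ∈ U, (1 - u t)))).symm
      _ = ∑ U : Finset (Fin n), (-1 : ℝ) ^ U.card * Q U * ∏ t ∈ U, (1 - u t) :=
          Finset.sum_congr rfl fun U _ => (rhs_eq U).symm
  rw [main, ← Finset.sum_filter_add_sum_filter_not Finset.univ
    (fun T : Finset (Fin n) => 1 < T.card), add_comm]
  congr 1
  have h0 : ((∅ : Finset (Fin n)) ∈ Finset.univ.filter
      (fun T : Finset (Fin n) => ¬ 1 < T.card)) := by simp
  rw [Finset.sum_eq_single_of_mem ∅ h0 ?_]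
  · rw [hQeq]; simp [hpe]
  · intro U hU hne
    simp only [Finset.mem_filter, Finset.mem_univ, true_and, not_lt] at hU
    have hpos : 0 < U.card := Finset.card_pos.2 (Finset.nonempty_iff_ne_empty.2 hne)
    have hcard : U.card = 1 := by omega
    obtain ⟨i, rfl⟩ := Finset.card_eq_one.1 hcard
    have hQi : Q {i} = 0 := by
      rw [hQeq]
      have hps : ({i} : Finset (Fin n)).powerset = {∅, {i}} := by
        rw [show ({i} : Finset (Fin n)) = insert i ∅ from rfl, Finset.powerset_insert]
        simp [Finset.image_singleton, ← Finset.insert_eq]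
      rw [hps, Finset.sum_insert (by simp only [Finset.mem_singleton]; exact (Finset.singleton_ne_empty i).symm), Finset.sum_singleton]
      simp [hpe, (hpi i).ne']
    rw [hQi]; ring

theorem laplace_copula_of_multivariate_gamma
    {n : ℕ} (p : Finset (Fin n) → ℝ) (lam : ℝ)
    (hpe : p ∅ = 1) (hpi : ∀ i : Fin n, 0 < p {i}) (hlam : 0 < lam)
    (P : (Fin n → ℝ) → ℝ)
    (hP : ∀ θ : Fin n → ℝ, P θ = ∑ T : Finset (Fin n), p T * ∏ i ∈ T, θ i) :
    ∀ v : Fin n → ℝ, (∀ i, v i ∈ Ioc (0:ℝ) 1) →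
      (P (fun i => (v i ^ (-(1 / lam)) - 1) / p {i})) ^ (-lam) =
        (∏ i : Fin n, v i) *
          (1 + ∑ T ∈ Finset.univ.filter (fun T : Finset (Fin n) => 1 < T.card),
              (-1 : ℝ) ^ T.card *
                P (fun i => if i ∈ T then -(1 / p {i}) else 0) *
                ∏ t ∈ T, (1 - v t ^ (1 / lam))) ^ (-lam) := by
  intro v hv
  have hvpos : ∀ i, (0:ℝ) < v i := fun i => (hv i).1
  set u : Fin n → ℝ := fun i => v i ^ (1 / lam) with hu
  have hupos : ∀ i, 0 < u i := fun i => Real.rpow_pos_of_pos (hvpos i) _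
  have hA : (0:ℝ) < ∏ i, u i := Finset.prod_pos fun i _ => hupos i
  have hargs : (fun i => (v i ^ (-(1 / lam)) - 1) / p {i}) =
      (fun i => ((u i)⁻¹ - 1) / p {i}) := by
    funext i
    rw [Real.rpow_neg (hvpos i).le]
  have key := key_identity p u hpe hpi hupos
    (fun T => P (fun i => if i ∈ T then -(1 / p {i}) else 0))
    (fun U => hP _)
  rw [hargs, hP]
  have hprodv : (∏ i, v i) = (∏ i, u i) ^ lam := by
    rw [← Real.finset_prod_rpow _ _ (fun i _ => (hupos i).le)]
    exact Finset.prod_congr rfl fun i _ => by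
      rw [hu, ← Real.rpow_mul (hvpos i).le, one_div,
        inv_mul_cancel₀ hlam.ne', Real.rpow_one]
  set X : ℝ := 1 + ∑ T ∈ Finset.univ.filter (fun T : Finset (Fin n) => 1 < T.card),
      (-1 : ℝ) ^ T.card * P (fun i => if i ∈ T then -(1 / p {i}) else 0) *
        ∏ t ∈ T, (1 - u t) with hX
  have hsum : (∑ T : Finset (Fin n), p T * ∏ i ∈ T, ((u i)⁻¹ - 1) / p {i}) =
      X * (∏ i, u i)⁻¹ := by
    rw [eq_mul_inv_iff_mul_eq₀ hA.ne', mul_comm]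
    exact key
  rw [hsum, mul_rpow_of_pos X (inv_pos.2 hA) (neg_ne_zero.2 hlam.ne'),
    Real.inv_rpow hA.le, Real.rpow_neg hA.le, inv_inv, hprodv]
  ring
end

section
/- Let P be an affine polynomial in n variables with P(0)=1 and p_i > 0, let Λ = (λ, λ₁, …, λₙ) with λ_i ≥ λ > 0, and let γ_{(P,Λ)} be the distribution with Laplace transform [P(θ)]^{-λ} Π_{i=1}^n (1+p_iθ_i)^{-(λ_i-λ)}. Then the Laplace copula of γ_{(P,Λ)} is C(v) = v^{[n]} · [1 + Σ_{T⊆[n], |T|>1} (-1)^{|T|} P(-(1/p)·1_T) · Π_{t∈T}(1 - v_t^{1/λ_t})]^{-λ}. -/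
open Finset Real Set

lemma prod_neg' {ι : Type*} (U : Finset ι) (w : ι → ℝ) :
    ∏ i ∈ U, (-w i) = (-1 : ℝ) ^ U.card * ∏ i ∈ U, w i := by
  rw [Finset.prod_congr rfl (fun i _ => (neg_one_mul (w i)).symm), Finset.prod_mul_distrib,
    Finset.prod_const]

lemma prodOneSub {ι : Type*} [DecidableEq ι] (A : Finset ι) (w : ι → ℝ) :
    ∏ i ∈ A, (1 - w i) = ∑ U ∈ A.powerset, (-1 : ℝ) ^ U.card * ∏ i ∈ U, w i := by
  have h := Finset.prod_add (fun i => -w i) (fun _ => (1:ℝ)) A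
  simp only [Finset.prod_const_one, mul_one] at h
  rw [Finset.prod_congr rfl (fun i (_ : i ∈ A) => show (1:ℝ) - w i = -w i + 1 by ring), h]
  exact Finset.sum_congr rfl fun U _ => by rw [prod_neg']

lemma mulRpow {a c r : ℝ} (hc : 0 < c) : (a * c) ^ r = a ^ r * c ^ r := by
  rcases le_or_gt 0 a with ha | ha
  · exact Real.mul_rpow ha hc.le
  · have hac : a * c < 0 := mul_neg_of_neg_of_pos ha hc
    rw [Real.rpow_def_of_neg hac, Real.rpow_def_of_neg ha, Real.rpow_def_of_pos hc,
      Real.log_mul (ne_of_lt ha) (ne_of_gt hc), add_mul, Real.exp_add]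
    ring

lemma keyIdentity {ι : Type*} [Fintype ι] [DecidableEq ι] (q : Finset ι → ℝ) (w : ι → ℝ) :
    ∑ T : Finset ι, (-1 : ℝ) ^ T.card * (∑ S ∈ T.powerset, q S * (-1 : ℝ) ^ S.card) *
        ∏ t ∈ T, w t
      = ∑ S : Finset ι, q S * (∏ i ∈ S, w i) * ∏ i ∈ Sᶜ, (1 - w i) := by
  have step1 : ∀ T : Finset ι,
      (-1 : ℝ) ^ T.card * (∑ S ∈ T.powerset, q S * (-1 : ℝ) ^ S.card) * ∏ t ∈ T, w t
        = ∑ S ∈ T.powerset, (-1 : ℝ) ^ T.card * (q S * (-1 : ℝ) ^ S.card) * ∏ t ∈ T, w t := by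
    intro T; rw [Finset.mul_sum, Finset.sum_mul]
  rw [Finset.sum_congr rfl fun T _ => step1 T]
  rw [Finset.sum_comm' (s' := fun S => Finset.univ.filter (fun T => S ⊆ T))
    (t' := Finset.univ) (by intro T S; simp [Finset.mem_powerset])]
  refine Finset.sum_congr rfl fun S _ => ?_
  have reidx : ∑ T ∈ Finset.univ.filter (fun T => S ⊆ T),
      (-1 : ℝ) ^ T.card * (q S * (-1 : ℝ) ^ S.card) * ∏ t ∈ T, w t
      = ∑ U ∈ Sᶜ.powerset,
        (-1 : ℝ) ^ S.card * (-1 : ℝ) ^ U.card * (q S * (-1 : ℝ) ^ S.card) *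
          ((∏ i ∈ S, w i) * ∏ i ∈ U, w i) := by
    refine Finset.sum_bij' (fun T _ => T \ S) (fun U _ => S ∪ U) ?_ ?_ ?_ ?_ ?_
    · intro T hT
      simp only [Finset.mem_powerset]
      intro i hi; rw [Finset.mem_compl]; exact (Finset.mem_sdiff.mp hi).2
    · intro U hU
      simp [Finset.mem_filter]
    · intro T hT
      simp only [Finset.mem_filter, Finset.mem_univ, true_and] at hT
      exact Finset.union_sdiff_of_subset hT
    · intro U hU
      simp only [Finset.mem_powerset] at hU
      exact Finset.union_sdiff_cancel_left (disjoint_compl_right.mono_right hU)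
    · intro T hT
      simp only [Finset.mem_filter, Finset.mem_univ, true_and] at hT
      have hcard : S.card + (T \ S).card = T.card := by
        rw [add_comm]; exact Finset.card_sdiff_add_card_eq_card hT
      have hprod : (∏ i ∈ S, w i) * ∏ i ∈ T \ S, w i = ∏ i ∈ T, w i := by
        rw [mul_comm]; exact Finset.prod_sdiff hT
      rw [← hcard, pow_add, ← hprod]
  rw [reidx]
  have h1 : ((-1 : ℝ)) ^ S.card * (-1 : ℝ) ^ S.card = 1 := by
    rw [← pow_add]; exact Even.neg_one_pow ⟨S.card, rfl⟩
  have : ∀ U ∈ Sᶜ.powerset,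
      (-1 : ℝ) ^ S.card * (-1 : ℝ) ^ U.card * (q S * (-1 : ℝ) ^ S.card) *
          ((∏ i ∈ S, w i) * ∏ i ∈ U, w i)
        = q S * (∏ i ∈ S, w i) * ((-1 : ℝ) ^ U.card * ∏ i ∈ U, w i) := by
    intro U _
    linear_combination (q S * (-1 : ℝ) ^ U.card * (∏ i ∈ S, w i) * (∏ i ∈ U, w i)) * h1
  rw [Finset.sum_congr rfl this, ← Finset.mul_sum, ← prodOneSub]

theorem laplace_copula_of_multifactor_gamma
    {n : ℕ} (p : Finset (Fin n) → ℝ) (lam : ℝ) (lami : Fin n → ℝ)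
    (hpe : p ∅ = 1) (hpi : ∀ i : Fin n, 0 < p {i}) (hlam : 0 < lam)
    (hlami : ∀ i, lam ≤ lami i)
    (P : (Fin n → ℝ) → ℝ)
    (hP : ∀ θ : Fin n → ℝ, P θ = ∑ T : Finset (Fin n), p T * ∏ i ∈ T, θ i) :
    ∀ v : Fin n → ℝ, (∀ i, v i ∈ Ioc (0:ℝ) 1) →
      (P (fun i => (v i ^ (-(1 / lami i)) - 1) / p {i})) ^ (-lam) *
          ∏ i : Fin n,
            (1 + p {i} * ((v i ^ (-(1 / lami i)) - 1) / p {i})) ^ (-(lami i - lam)) =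
        (∏ i : Fin n, v i) *
          (1 + ∑ T ∈ Finset.univ.filter (fun T : Finset (Fin n) => 1 < T.card),
              (-1 : ℝ) ^ T.card *
                P (fun i => if i ∈ T then -(1 / p {i}) else 0) *
                ∏ t ∈ T, (1 - v t ^ (1 / lami t))) ^ (-lam) := by
  intro v hv
  have hvp : ∀ i, 0 < v i := fun i => (hv i).1
  have hlami' : ∀ i, 0 < lami i := fun i => lt_of_lt_of_le hlam (hlami i)
  set u : Fin n → ℝ := fun i => v i ^ (1 / lami i) with hu_def
  have hup : ∀ i, 0 < u i := fun i => Real.rpow_pos_of_pos (hvp i) _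
  have hune : ∀ i, u i ≠ 0 := fun i => (hup i).ne'
  have hpne : ∀ i, p {i} ≠ 0 := fun i => (hpi i).ne'
  have hut : ∀ t, v t ^ (1 / lami t) = u t := fun t => rfl
  have hx : ∀ i, v i ^ (-(1 / lami i)) = (u i)⁻¹ := fun i => by
    rw [Real.rpow_neg (hvp i).le, hut]
  have hv_eq : ∀ i, u i ^ lami i = v i := fun i => by
    rw [show u i = v i ^ (1 / lami i) from rfl, ← Real.rpow_mul (hvp i).le,
      one_div_mul_cancel (hlami' i).ne', Real.rpow_one]
  simp only [hx, hut]
  set q : Finset (Fin n) → ℝ := fun T => p T * ∏ i ∈ T, (p {i})⁻¹ with hq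
  -- the marginal factors
  have hmarg : ∀ i : Fin n,
      (1 + p {i} * (((u i)⁻¹ - 1) / p {i})) ^ (-(lami i - lam)) = v i * u i ^ (-lam) := by
    intro i
    have h1 : 1 + p {i} * (((u i)⁻¹ - 1) / p {i}) = (u i)⁻¹ := by
      rw [mul_div_cancel₀ _ (hpne i)]; ring
    rw [h1, Real.inv_rpow (hup i).le, ← Real.rpow_neg (hup i).le, neg_neg,
      show lami i - lam = lami i + (-lam) by ring, Real.rpow_add (hup i), hv_eq i]
  have hprodm : ∏ i : Fin n, (1 + p {i} * (((u i)⁻¹ - 1) / p {i})) ^ (-(lami i - lam))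
      = (∏ i : Fin n, v i) * (∏ i : Fin n, u i) ^ (-lam) := by
    rw [Finset.prod_congr rfl (fun i _ => hmarg i), Finset.prod_mul_distrib,
      Real.finset_prod_rpow _ _ (fun i _ => (hup i).le)]
  -- P evaluated at the indicator-type points
  have hPT : ∀ T : Finset (Fin n),
      P (fun i => if i ∈ T then -(1 / p {i}) else 0)
        = ∑ S ∈ T.powerset, q S * (-1 : ℝ) ^ S.card := by
    intro T
    rw [hP]
    rw [← Finset.sum_subset (Finset.subset_univ T.powerset) ?van]
    case van =>
      intro S _ hS
      rw [Finset.mem_powerset] at hS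
      obtain ⟨i, hiS, hiT⟩ := Finset.not_subset.mp hS
      have hz : (∏ i ∈ S, if i ∈ T then -(1 / p {i}) else 0) = 0 :=
        Finset.prod_eq_zero hiS (if_neg hiT)
      rw [hz, mul_zero]
    refine Finset.sum_congr rfl fun S hS => ?_
    rw [Finset.mem_powerset] at hS
    rw [Finset.prod_congr rfl (fun i hi => if_pos (hS hi)),
      Finset.prod_congr rfl (fun i (_ : i ∈ S) =>
        show -(1 / p {i}) = -(p {i})⁻¹ by rw [one_div]),
      prod_neg' S (fun i => (p {i})⁻¹), hq]
    ring
  -- P θ * ∏ u  equals the sum over subsets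
  have hPθ : P (fun i => ((u i)⁻¹ - 1) / p {i}) * ∏ i : Fin n, u i
      = ∑ T : Finset (Fin n), q T * (∏ i ∈ T, (1 - u i)) * ∏ i ∈ Tᶜ, u i := by
    rw [hP, Finset.sum_mul]
    refine Finset.sum_congr rfl fun T _ => ?_
    rw [← Finset.prod_mul_prod_compl T u]
    have h2 : (∏ i ∈ T, (((u i)⁻¹ - 1) / p {i})) * ∏ i ∈ T, u i
        = (∏ i ∈ T, (p {i})⁻¹) * ∏ i ∈ T, (1 - u i) := by
      rw [← Finset.prod_mul_distrib, ← Finset.prod_mul_distrib]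
      refine Finset.prod_congr rfl fun i _ => ?_
      field_simp [hune i, hpne i]
    calc p T * (∏ i ∈ T, (((u i)⁻¹ - 1) / p {i})) * ((∏ i ∈ T, u i) * ∏ i ∈ Tᶜ, u i)
        = p T * ((∏ i ∈ T, (((u i)⁻¹ - 1) / p {i})) * ∏ i ∈ T, u i) * ∏ i ∈ Tᶜ, u i := by
          ring
      _ = q T * (∏ i ∈ T, (1 - u i)) * ∏ i ∈ Tᶜ, u i := by rw [h2, hq]; ring
  -- the small-card terms contribute exactly 1
  have hsmall : ∑ T ∈ Finset.univ.filter (fun T : Finset (Fin n) => ¬ 1 < T.card),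
      (-1 : ℝ) ^ T.card * (∑ S ∈ T.powerset, q S * (-1 : ℝ) ^ S.card) *
        ∏ t ∈ T, (1 - u t) = 1 := by
    have hterm : ∀ T ∈ Finset.univ.filter (fun T : Finset (Fin n) => ¬ 1 < T.card),
        (-1 : ℝ) ^ T.card * (∑ S ∈ T.powerset, q S * (-1 : ℝ) ^ S.card) *
          ∏ t ∈ T, (1 - u t) = if T = ∅ then 1 else 0 := by
      intro T hT
      rw [Finset.mem_filter] at hT
      have hc : T.card ≤ 1 := not_lt.mp hT.2
      interval_cases h : T.card
      · have hTe : T = ∅ := Finset.card_eq_zero.mp h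
        subst hTe
        simp [hq, hpe]
      · obtain ⟨a, ha⟩ := Finset.card_eq_one.mp h
        subst ha
        have hps : ({a} : Finset (Fin n)).powerset = {∅, {a}} := rfl
        rw [hps]
        have hne : (∅ : Finset (Fin n)) ≠ {a} := (Finset.singleton_ne_empty a).symm
        rw [Finset.sum_pair hne]
        simp [hq, hpe, hpne a]
    rw [Finset.sum_congr rfl hterm, Finset.sum_ite_eq' _ (∅ : Finset (Fin n)) (fun _ => 1)]
    simp
  -- identify the rpow base on the RHS
  have hbase : (1 + ∑ T ∈ Finset.univ.filter (fun T : Finset (Fin n) => 1 < T.card),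
      (-1 : ℝ) ^ T.card * P (fun i => if i ∈ T then -(1 / p {i}) else 0) *
        ∏ t ∈ T, (1 - u t))
      = P (fun i => ((u i)⁻¹ - 1) / p {i}) * ∏ i : Fin n, u i := by
    have hkey : ∑ T : Finset (Fin n), (-1 : ℝ) ^ T.card *
          (∑ S ∈ T.powerset, q S * (-1 : ℝ) ^ S.card) * ∏ t ∈ T, (1 - u t)
        = ∑ S : Finset (Fin n), q S * (∏ i ∈ S, (1 - u i)) * ∏ i ∈ Sᶜ, (1 - (1 - u i)) :=
      keyIdentity q (fun i => 1 - u i)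
    simp only [sub_sub_cancel] at hkey
    rw [Finset.sum_congr rfl (fun T _ => by rw [hPT T]), hPθ, ← hkey,
      ← Finset.sum_filter_add_sum_filter_not Finset.univ
        (fun T : Finset (Fin n) => 1 < T.card)
        (fun T => (-1 : ℝ) ^ T.card * (∑ S ∈ T.powerset, q S * (-1 : ℝ) ^ S.card) *
          ∏ t ∈ T, (1 - u t)), hsmall]
    ring
  rw [hprodm, hbase, mulRpow (Finset.prod_pos fun i _ => hup i)]
  ring
end

section
/- Let P(θ) = 1 + Σp_iθ_i + Σ_{i<j}p_{ij}θ_iθ_j + p₁₂₃θ₁θ₂θ₃ be an affine polynomial in 3 variables with p₁₂₃ ≠ 0, and set q₁ = (p₁+p₁₃θ₃)/(1+p₃θ₃), q₂ = (p₂+p₂₃θ₃)/(1+p₃θ₃), q₁₂ = (p₁₂+p₁₂₃θ₃)/(1+p₃θ₃). Then (-q₁₂ + q₁q₂)/q₁₂² = b̃₁₂ + b̃₁₂₃/(θ₃ - p̃₃) + b̃₁₃b̃₂₃/(θ₃ - p̃₃)², where p̃_T = -p_{T̄}/p₁₂₃ (T̄ the complement of T in {1,2,3}), b̃_{ij} =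 p̃_{ij} + p̃_i p̃_j, and b̃₁₂₃ = p̃₁₂₃ + p̃₁p̃₂₃ + p̃₂p̃₁₃ + p̃₃p̃₁₂ + 2p̃₁p̃₂p̃₃. -/
set_option maxHeartbeats 2000000


theorem trivariate_rational_identity
    (p₁ p₂ p₃ p₁₂ p₁₃ p₂₃ p₁₂₃ θ₃ : ℝ)
    (hp : p₁₂₃ ≠ 0) (h1 : 1 + p₃ * θ₃ ≠ 0)
    (q₁ q₂ q₁₂ : ℝ)
    (hq₁ : q₁ = (p₁ + p₁₃ * θ₃) / (1 + p₃ * θ₃))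
    (hq₂ : q₂ = (p₂ + p₂₃ * θ₃) / (1 + p₃ * θ₃))
    (hq₁₂ : q₁₂ = (p₁₂ + p₁₂₃ * θ₃) / (1 + p₃ * θ₃))
    (hq₁₂ne : q₁₂ ≠ 0)
    (tp₁ tp₂ tp₃ tp₁₂ tp₁₃ tp₂₃ tp₁₂₃ tb₁₂ tb₁₃ tb₂₃ tb₁₂₃ : ℝ)
    (htp₁ : tp₁ = -p₂₃ / p₁₂₃) (htp₂ : tp₂ = -p₁₃ / p₁₂₃) (htp₃ : tp₃ = -p₁₂ / p₁₂₃)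
    (htp₁₂ : tp₁₂ = -p₃ / p₁₂₃) (htp₁₃ : tp₁₃ = -p₂ / p₁₂₃) (htp₂₃ : tp₂₃ = -p₁ / p₁₂₃)
    (htp₁₂₃ : tp₁₂₃ = -1 / p₁₂₃)
    (htb₁₂ : tb₁₂ = tp₁₂ + tp₁ * tp₂)
    (htb₁₃ : tb₁₃ = tp₁₃ + tp₁ * tp₃)
    (htb₂₃ : tb₂₃ = tp₂₃ + tp₂ * tp₃)
    (htb₁₂₃ : tb₁₂₃ = tp₁₂₃ + tp₁ * tp₂₃ + tp₂ * tp₁₃ + tp₃ * tp₁₂ + 2 * tp₁ * tp₂ * tp₃)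
    (hθ : θ₃ ≠ tp₃) :
    (-q₁₂ + q₁ * q₂) / q₁₂ ^ 2 =
      tb₁₂ + tb₁₂₃ / (θ₃ - tp₃) + tb₁₃ * tb₂₃ / (θ₃ - tp₃) ^ 2 := by
  have hnum : p₁₂ + p₁₂₃ * θ₃ ≠ 0 := by
    intro h
    apply hq₁₂ne
    rw [hq₁₂, h, zero_div]
  have hL : (-q₁₂ + q₁ * q₂) / q₁₂ ^ 2 =
      ((p₁ + p₁₃ * θ₃) * (p₂ + p₂₃ * θ₃) - (p₁₂ + p₁₂₃ * θ₃) * (1 + p₃ * θ₃)) /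
        (p₁₂ + p₁₂₃ * θ₃) ^ 2 := by
    rw [hq₁, hq₂, hq₁₂]
    rw [mul_comm p₃ θ₃] at h1
    field_simp
    ring
  have h3 : θ₃ - tp₃ = (p₁₂ + p₁₂₃ * θ₃) / p₁₂₃ := by
    rw [htp₃]; field_simp; ring
  have hR : tb₁₂ + tb₁₂₃ / (θ₃ - tp₃) + tb₁₃ * tb₂₃ / (θ₃ - tp₃) ^ 2 =
      (tb₁₂ * (p₁₂ + p₁₂₃ * θ₃) ^ 2 + tb₁₂₃ * p₁₂₃ * (p₁₂ + p₁₂₃ * θ₃) +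
        tb₁₃ * tb₂₃ * p₁₂₃ ^ 2) / (p₁₂ + p₁₂₃ * θ₃) ^ 2 := by
    rw [h3]
    field_simp
  rw [hL, hR, div_eq_div_iff (by positivity) (by positivity)]
  subst htb₁₂ htb₁₃ htb₂₃ htb₁₂₃ htp₁ htp₂ htp₃ htp₁₂ htp₁₃ htp₂₃ htp₁₂₃
  field_simp
  ring
end
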